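/- Let n, m ≥ 2 and let f : E(n) → E(m) be an injective function preserving ∔, − and 0 and satisfying f(a_{11}) = b_{11}, f(a_{12}) = b_{12}, f(a_{21}) = b_{21}, f(a_{22}) = b_{22}, f(a_{n−1,n−1}) = b_{m−1,m−1}, f(a_{n−1,n}) = b_{m−1,m}, f(a_{n,n−1}) = b_{m,m−1}, and f(a_{nn}) = b_{mm}, where a_{ik} := some (true, (i,k)) in E(n) and b_{ik} := some (true, (i,k)) in E(m). Then n = m and f is the identity morphism: f(none) = none and f(some (ε, (i,k))) = some (ε, (i,k)) for every ε ∈ Bool and every (i,k) ∈ S(n). -/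

import Mathlib

open scoped Classical

def Sset (n : ℕ) : Set (ℕ × ℕ) :=
  {p | 1 ≤ p.1 ∧ p.1 ≤ n ∧ 1 ≤ p.2 ∧ p.2 ≤ n ∧ p.1 ≤ p.2 + 1 ∧ p.2 ≤ p.1 + 2}

/-- `S(n)` as a sublattice of `ℕ × ℕ` (componentwise max and min). -/
def SL (n : ℕ) : Sublattice (ℕ × ℕ) where
  carrier := Sset n
  supClosed' := by
    rintro ⟨i, k⟩ h1 ⟨l, m⟩ h2
    simp only [Sset, Set.mem_setOf_eq, Prod.sup_def] at h1 h2 ⊢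
    omega
  infClosed' := by
    rintro ⟨i, k⟩ h1 ⟨l, m⟩ h2
    simp only [Sset, Set.mem_setOf_eq, Prod.inf_def] at h1 h2 ⊢
    omega

/-- `D(n) = WithBot S(n)`: `S(n)` with a bottom element `O` adjoined. -/
abbrev Dn (n : ℕ) : Type := WithBot ↥(SL n)

/-- The element `a_{ik}` of `D(n)` (junk value `⊥` if `(i,k) ∉ S(n)`). -/
noncomputable def aElt (n i k : ℕ) : Dn n :=
  if h : (i, k) ∈ SL n then (↑(⟨(i, k), h⟩ : ↥(SL n)) : Dn n) else ⊥

/-- F∞-module structure on `Option (Bool × α)` for a meet-semilattice `α`. -/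
abbrev Emod (α : Type) : Type := Option (Bool × α)

/-- Negation: `−none = none`, `−some (ε, p) = some (¬ε, p)`. -/
def Emod.neg {α : Type} : Emod α → Emod α :=
  Option.map (fun p => (!p.1, p.2))

/-- Addition: `x ∔ none = none ∔ x = none`, and
`some (ε, p) ∔ some (ε', q) = some (ε, p ⊓ q)` if `ε = ε'`, `none` otherwise. -/
noncomputable def Emod.add {α : Type} [SemilatticeInf α] : Emod α → Emod α → Emod α
  | some (ε, p), some (ε', q) => if ε = ε' then some (ε, p ⊓ q) else none
  | _, _ => none

/-- Nonzero vectors of the free F∞-module of rank `m`. -/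
abbrev FVec (m : ℕ) : Type := {σ : Fin m → Option Bool // σ ≠ fun _ => none}

/-- The free F∞-module of rank `m`, with zero `none`. -/
abbrev Fm (m : ℕ) : Type := Option (FVec m)

/-- Negation on the free F∞-module: Boolean negation on each defined value. -/
def Fm.neg {m : ℕ} : Fm m → Fm m :=
  Option.map (fun σ => ⟨fun i => (σ.val i).map (fun b => !b), by
    intro hcontra
    apply σ.prop
    funext i
    have h := congrFun hcontra i
    simpa using h⟩)

/-- Addition on the free F∞-module: `none` absorbs; two nonzero vectors add to `none`
if they clash in some coordinate, and otherwise to their pointwise merge. -/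
noncomputable def Fm.add {m : ℕ} : Fm m → Fm m → Fm m
  | some σ, some τ =>
      if ∃ (i : Fin m) (b : Bool), σ.val i = some b ∧ τ.val i = some (!b) then none
      else some ⟨fun i => (σ.val i).or (τ.val i), by
        intro hcontra
        apply σ.prop
        funext i
        have h := congrFun hcontra i
        cases hv : σ.val i with
        | none => rfl
        | some b => rw [hv] at h; simp [Option.or] at h⟩
  | _, _ => none

/-- A type with F∞-module operations `0`, `∔`, `−`. -/
class FStr (α : Type) where
  z : α
  add : α → α → α
  neg : α → α

noncomputable instance {α : Type} [SemilatticeInf α] : FStr (Emod α) :=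
  ⟨none, Emod.add, Emod.neg⟩

noncomputable instance {m : ℕ} : FStr (Fm m) :=
  ⟨none, Fm.add, Fm.neg⟩

/-- A map preserving `0`, `∔` and `−`. -/
def IsFHom {α β : Type} [FStr α] [FStr β] (f : α → β) : Prop :=
  f FStr.z = FStr.z ∧ (∀ x y, f (FStr.add x y) = FStr.add (f x) (f y)) ∧
    ∀ x, f (FStr.neg x) = FStr.neg (f x)

/-- The F∞-module `E(n) = Option (Bool × S(n))`. -/
abbrev En (n : ℕ) : Type := Emod ↥(SL n)

/-- The element `some (ε, (i,k))` of `E(n)` (junk value `none` if `(i,k) ∉ S(n)`). -/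
noncomputable def eElt (n : ℕ) (ε : Bool) (i k : ℕ) : En n :=
  if h : (i, k) ∈ SL n then some (ε, ⟨(i, k), h⟩) else none

set_option maxHeartbeats 1000000

lemma mem_SL' {n : ℕ} {p : ℕ × ℕ} (h : p ∈ Sset n) : p ∈ SL n := h

lemma eElt_eq' {n : ℕ} (ε : Bool) {i k : ℕ} (h : (i,k) ∈ Sset n) :
    eElt n ε i k = some (ε, ⟨(i,k), mem_SL' h⟩) := dif_pos (mem_SL' h)

lemma eElt_add' {n : ℕ} {a b c d : ℕ} (h1 : (a,b) ∈ Sset n) (h2 : (c,d) ∈ Sset n) :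
    Emod.add (eElt n true a b) (eElt n true c d) = eElt n true (min a c) (min b d) := by
  have h3 : ((min a c, min b d) : ℕ×ℕ) ∈ Sset n := by
    simp only [Sset, Set.mem_setOf_eq] at h1 h2 ⊢; omega
  have h4 : (⟨(a,b), mem_SL' h1⟩ : ↥(SL n)) ⊓ ⟨(c,d), mem_SL' h2⟩
      = ⟨(min a c, min b d), mem_SL' h3⟩ := by
    apply Subtype.ext
    rw [Sublattice.coe_inf]
    simp [Prod.inf_def]
  rw [eElt_eq' true h1, eElt_eq' true h2, eElt_eq' true h3, ← h4]
  simp [Emod.add]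

lemma eElt_inj' {m : ℕ} {a b c d : ℕ} (h1 : (a,b) ∈ Sset m) (h2 : (c,d) ∈ Sset m)
    (h : eElt m true a b = eElt m true c d) : a = c ∧ b = d := by
  rw [eElt_eq' true h1, eElt_eq' true h2] at h
  simp only [Option.some.injEq, Prod.mk.injEq, Subtype.mk.injEq] at h
  exact h.2

lemma eElt_neg' {n : ℕ} {i k : ℕ} (h : (i,k) ∈ Sset n) :
    Emod.neg (eElt n true i k) = eElt n false i k := by
  rw [eElt_eq' true h, eElt_eq' false h]
  simp [Emod.neg]

lemma step {n m : ℕ} (ψ : ℕ × ℕ → ℕ × ℕ)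
    (hmem : ∀ p ∈ Sset n, ψ p ∈ Sset m)
    (hmeet : ∀ a b c d : ℕ, (a,b) ∈ Sset n → (c,d) ∈ Sset n →
      ψ (min a c, min b d) = (min (ψ (a,b)).1 (ψ (c,d)).1, min (ψ (a,b)).2 (ψ (c,d)).2))
    (hinj : ∀ a b c d : ℕ, (a,b) ∈ Sset n → (c,d) ∈ Sset n → ψ (a,b) = ψ (c,d) → a = c ∧ b = d)
    (j : ℕ) (hj1 : 1 ≤ j) (hj2 : j + 2 ≤ n)
    (ha : ψ (j, j) = (j, j)) (hb : ψ (j, j+1) = (j, j+1))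
    (hc : ψ (j+1, j) = (j+1, j)) (hd : ψ (j, j+2) = (j, j+2)) :
    ψ (j+1, j+1) = (j+1, j+1) ∧ ψ (j+2, j+1) = (j+2, j+1) ∧
    (j + 3 ≤ n → ψ (j+1, j+2) = (j+1, j+2) ∧ ψ (j+1, j+3) = (j+1, j+3)) := by
  have mb : ((j, j+1) : ℕ×ℕ) ∈ Sset n := by simp only [Sset, Set.mem_setOf_eq]; omega
  have mc : ((j+1, j) : ℕ×ℕ) ∈ Sset n := by simp only [Sset, Set.mem_setOf_eq]; omega
  have md : ((j, j+2) : ℕ×ℕ) ∈ Sset n := by simp only [Sset, Set.mem_setOf_eq]; omega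
  have me : ((j+1, j+1) : ℕ×ℕ) ∈ Sset n := by simp only [Sset, Set.mem_setOf_eq]; omega
  have mf : ((j+1, j+2) : ℕ×ℕ) ∈ Sset n := by simp only [Sset, Set.mem_setOf_eq]; omega
  have mg : ((j+2, j+1) : ℕ×ℕ) ∈ Sset n := by simp only [Sset, Set.mem_setOf_eq]; omega
  rcases hX : ψ (j+1, j+1) with ⟨X1, X2⟩
  rcases hU : ψ (j+1, j+2) with ⟨U1, U2⟩
  rcases hV : ψ (j+2, j+1) with ⟨V1, V2⟩
  have cU := hmem _ mf; rw [hU] at cU; simp only [Sset, Set.mem_setOf_eq] at cU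
  have cV := hmem _ mg; rw [hV] at cV; simp only [Sset, Set.mem_setOf_eq] at cV
  have E2 := hmeet (j+1) j (j+1) (j+1) mc me
  rw [show min (j+1) (j+1) = j+1 from by omega, show min j (j+1) = j from by omega,
    hc, hX] at E2
  simp only [Prod.mk.injEq] at E2
  have F2 : j + 1 ≤ X1 := by
    rcases E2 with ⟨e, -⟩; omega
  clear E2
  have E3 := hmeet j (j+2) (j+1) (j+1) md me
  rw [show min j (j+1) = j from by omega, show min (j+2) (j+1) = j+1 from by omega,
    hb, hd, hX] at E3
  simp only [Prod.mk.injEq] at E3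
  have F3 : X2 = j + 1 := by
    rcases E3 with ⟨-, e⟩; omega
  clear E3
  have E4 := hmeet j (j+2) (j+2) (j+1) md mg
  rw [show min j (j+2) = j from by omega, show min (j+2) (j+1) = j+1 from by omega,
    hb, hd, hV] at E4
  simp only [Prod.mk.injEq] at E4
  have F4 : V2 = j + 1 := by
    rcases E4 with ⟨-, e⟩; omega
  clear E4
  have E5 := hmeet (j+1) j (j+2) (j+1) mc mg
  rw [show min (j+1) (j+2) = j+1 from by omega, show min j (j+1) = j from by omega,
    hc, hV] at E5
  simp only [Prod.mk.injEq] at E5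
  have F5 : j + 1 ≤ V1 := by
    rcases E5 with ⟨e, -⟩; omega
  clear E5
  have E6 := hmeet (j+1) (j+2) (j+2) (j+1) mf mg
  rw [show min (j+1) (j+2) = j+1 from by omega, show min (j+2) (j+1) = j+1 from by omega,
    hX, hU, hV] at E6
  simp only [Prod.mk.injEq] at E6
  have G6a : X1 ≤ U1 ∧ X1 ≤ V1 ∧ (X1 = U1 ∨ X1 = V1) := by
    rcases E6 with ⟨e, -⟩; omega
  have G6b : X2 ≤ U2 ∧ X2 ≤ V2 := by
    rcases E6 with ⟨-, e⟩; omega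
  clear E6
  have E7 := hmeet j (j+2) (j+1) (j+2) md mf
  rw [show min j (j+1) = j from by omega, show min (j+2) (j+2) = j+2 from by omega,
    hd, hU] at E7
  simp only [Prod.mk.injEq] at E7
  have F7 : j + 2 ≤ U2 := by
    rcases E7 with ⟨-, e⟩; omega
  clear E7
  have hV1 : V1 = j + 2 := by
    by_contra hne
    have h2 := hinj (j+1) (j+1) (j+2) (j+1) me mg
      (by rw [hX, hV]; simp only [Prod.mk.injEq]; omega)
    omega
  have hX1 : X1 = j + 1 := by
    by_contra hne
    have h2 := hinj (j+1) (j+1) (j+2) (j+1) me mg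
      (by rw [hX, hV]; simp only [Prod.mk.injEq]; omega)
    omega
  refine ⟨by simp only [Prod.mk.injEq]; omega,
    by simp only [Prod.mk.injEq]; omega, ?_⟩
  intro hj3
  have mh : ((j+1, j+3) : ℕ×ℕ) ∈ Sset n := by simp only [Sset, Set.mem_setOf_eq]; omega
  rcases hW : ψ (j+1, j+3) with ⟨W1, W2⟩
  have cW := hmem _ mh; rw [hW] at cW; simp only [Sset, Set.mem_setOf_eq] at cW
  have E8 := hmeet (j+1) (j+3) (j+2) (j+1) mh mg
  rw [show min (j+1) (j+2) = j+1 from by omega, show min (j+3) (j+1) = j+1 from by omega,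
    hX, hW, hV] at E8
  simp only [Prod.mk.injEq] at E8
  have F8 : W1 = j + 1 := by
    rcases E8 with ⟨e, -⟩; omega
  clear E8
  have E9 := hmeet (j+1) (j+2) (j+1) (j+3) mf mh
  rw [show min (j+1) (j+1) = j+1 from by omega, show min (j+2) (j+3) = j+2 from by omega,
    hU, hW] at E9
  simp only [Prod.mk.injEq] at E9
  have F9 : U2 ≤ W2 := by
    rcases E9 with ⟨-, e⟩; omega
  clear E9
  have hUW : ¬ (U1 = W1 ∧ U2 = W2) := by
    rintro ⟨r1, r2⟩
    have h2 := hinj (j+1) (j+2) (j+1) (j+3) mf mh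
      (by rw [hU, hW]; simp only [Prod.mk.injEq]; omega)
    omega
  constructor
  · simp only [Prod.mk.injEq]; omega
  · simp only [Prod.mk.injEq]; omega

lemma comb (n m : ℕ) (hn : 2 ≤ n) (hm : 2 ≤ m) (ψ : ℕ × ℕ → ℕ × ℕ)
    (hmem : ∀ p ∈ Sset n, ψ p ∈ Sset m)
    (hmeet : ∀ a b c d : ℕ, (a,b) ∈ Sset n → (c,d) ∈ Sset n →
      ψ (min a c, min b d) = (min (ψ (a,b)).1 (ψ (c,d)).1, min (ψ (a,b)).2 (ψ (c,d)).2))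
    (hinj : ∀ a b c d : ℕ, (a,b) ∈ Sset n → (c,d) ∈ Sset n → ψ (a,b) = ψ (c,d) → a = c ∧ b = d)
    (c11 : ψ (1,1) = (1,1)) (c12 : ψ (1,2) = (1,2))
    (c21 : ψ (2,1) = (2,1)) (c22 : ψ (2,2) = (2,2))
    (d21 : ψ (n, n-1) = (m, m-1)) (d12 : ψ (n-1, n) = (m-1, m))
    (d22 : ψ (n, n) = (m, m)) :
    n = m ∧ ∀ p ∈ Sset n, ψ p = p := by
  rcases eq_or_lt_of_le hn with h2 | h3
  · -- n = 2
    obtain rfl : n = 2 := h2.symm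
    have hm2 : m = 2 := by
      rw [show (2:ℕ) - 1 = 1 from rfl, c21] at d21
      simp only [Prod.mk.injEq] at d21; omega
    subst hm2
    refine ⟨rfl, ?_⟩
    rintro ⟨i, k⟩ hp
    simp only [Sset, Set.mem_setOf_eq] at hp
    have hik : (i = 1 ∨ i = 2) ∧ (k = 1 ∨ k = 2) := by omega
    rcases hik with ⟨h | h, h' | h'⟩ <;> subst h <;> subst h' <;> assumption
  · -- n ≥ 3
    have hn3 : 3 ≤ n := h3
    have H : ∀ j, 1 ≤ j → j + 2 ≤ n →
        ψ (j,j) = (j,j) ∧ ψ (j,j+1) = (j,j+1) ∧ ψ (j+1,j) = (j+1,j) ∧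
        ψ (j,j+2) = (j,j+2) := by
      intro j
      induction j with
      | zero => intro h; exact absurd h (by omega)
      | succ i ih =>
        intro h1 h2
        by_cases hi : i = 0
        · subst hi
          refine ⟨c11, c12, c21, ?_⟩
          show ψ (1, 3) = (1, 3)
          have m13 : ((1,3) : ℕ×ℕ) ∈ Sset n := by simp only [Sset, Set.mem_setOf_eq]; omega
          have m21 : ((2,1) : ℕ×ℕ) ∈ Sset n := by simp only [Sset, Set.mem_setOf_eq]; omega
          have m22 : ((2,2) : ℕ×ℕ) ∈ Sset n := by simp only [Sset, Set.mem_setOf_eq]; omega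
          have m12 : ((1,2) : ℕ×ℕ) ∈ Sset n := by simp only [Sset, Set.mem_setOf_eq]; omega
          rcases hw : ψ (1, 3) with ⟨w1, w2⟩
          have cw := hmem _ m13; rw [hw] at cw; simp only [Sset, Set.mem_setOf_eq] at cw
          have B1 := hmeet 1 3 2 1 m13 m21
          rw [show min 1 2 = 1 from rfl, show min 3 1 = 1 from rfl, c11, hw, c21] at B1
          simp only [Prod.mk.injEq] at B1
          have Fb1 : w1 = 1 := by rcases B1 with ⟨e, -⟩; omega
          clear B1
          have B2 := hmeet 1 3 2 2 m13 m22
          rw [show min 1 2 = 1 from rfl, show min 3 2 = 2 from rfl, c12, hw, c22] at B2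
          simp only [Prod.mk.injEq] at B2
          have Fb2 : 2 ≤ w2 := by rcases B2 with ⟨-, e⟩; omega
          clear B2
          have hw2 : w2 = 3 := by
            by_contra hne
            have h2' := hinj 1 3 1 2 m13 m12
              (by rw [hw, c12]; simp only [Prod.mk.injEq]; omega)
            omega
          simp only [Prod.mk.injEq]; omega
        · have h1' : 1 ≤ i := by omega
          obtain ⟨ha, hb, hc, hd⟩ := ih h1' (by omega)
          obtain ⟨s1, s2, s3⟩ := step ψ hmem hmeet hinj i h1' (by omega) ha hb hc hd
          obtain ⟨s4, s5⟩ := s3 (by omega)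
          exact ⟨s1, s4, s2, s5⟩
    have Hf := H (n-2) (by omega) (by omega)
    obtain ⟨s1, s2, s3⟩ := step ψ hmem hmeet hinj (n-2) (by omega) (by omega)
      Hf.1 Hf.2.1 Hf.2.2.1 Hf.2.2.2
    rw [show n - 2 + 1 = n - 1 from by omega] at s1 s2
    rw [show n - 2 + 2 = n from by omega] at s2
    -- s1 : ψ (n-1, n-1) = (n-1, n-1), s2 : ψ (n, n-1) = (n, n-1)
    have hnm : n = m := by
      rw [s2] at d21; simp only [Prod.mk.injEq] at d21; omega
    subst hnm
    refine ⟨rfl, ?_⟩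
    rintro ⟨i, k⟩ hp
    simp only [Sset, Set.mem_setOf_eq] at hp
    have hcases : (k = i ∧ i + 2 ≤ n) ∨ (k = i ∧ i = n-1) ∨ (k = i ∧ i = n) ∨
        (k = i+1 ∧ i + 2 ≤ n) ∨ (k = i+1 ∧ i = n-1) ∨
        (i = k+1 ∧ k + 2 ≤ n) ∨ (i = k+1 ∧ k = n-1) ∨ (k = i+2) := by omega
    have h1i : 1 ≤ i := by omega
    have h1k : 1 ≤ k := by omega
    rcases hcases with ⟨e1, h⟩ | ⟨e1, e2⟩ | ⟨e1, e2⟩ | ⟨e1, h⟩ | ⟨e1, e2⟩ |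
      ⟨e1, h⟩ | ⟨e1, e2⟩ | e1
    · subst e1; exact (H k h1k h).1
    · subst e1; subst e2; exact s1
    · subst e1; subst e2; exact d22
    · subst e1; exact (H i h1i h).2.1
    · subst e1; subst e2; rw [show n - 1 + 1 = n from by omega]; exact d12
    · subst e1; exact (H k h1k h).2.2.1
    · subst e1; subst e2; rw [show n - 1 + 1 = n from by omega]; exact s2
    · subst e1; exact (H i h1i (by omega)).2.2.2

/-- Any injective map `f : E(n) → E(m)` (`n, m ≥ 2`) preserving `∔`, `−` and `0` and
matching the four bottom corner elements `a_{11}, a_{12}, a_{21}, a_{22}` and the four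
top corner elements is the identity morphism (and in particular `n = m`). -/
theorem stmt6 (n m : ℕ) (hn : 2 ≤ n) (hm : 2 ≤ m)
    (f : En n → En m) (hhom : IsFHom f) (hinj : Function.Injective f)
    (h11 : f (eElt n true 1 1) = eElt m true 1 1)
    (h12 : f (eElt n true 1 2) = eElt m true 1 2)
    (h21 : f (eElt n true 2 1) = eElt m true 2 1)
    (h22 : f (eElt n true 2 2) = eElt m true 2 2)
    (t11 : f (eElt n true (n - 1) (n - 1)) = eElt m true (m - 1) (m - 1))
    (t12 : f (eElt n true (n - 1) n) = eElt m true (m - 1) m)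
    (t21 : f (eElt n true n (n - 1)) = eElt m true m (m - 1))
    (t22 : f (eElt n true n n) = eElt m true m m) :
    n = m ∧ f none = none ∧
      ∀ (ε : Bool) (i k : ℕ), (i, k) ∈ Sset n → f (eElt n ε i k) = eElt m ε i k := by
    classical
  obtain ⟨hz0, hadd0, hneg0⟩ := hhom
  have hz' : f none = none := hz0
  have hadd' : ∀ x y : En n, f (Emod.add x y) = Emod.add (f x) (f y) := hadd0
  have hneg' : ∀ x : En n, f (Emod.neg x) = Emod.neg (f x) := hneg0
  have hnone : ∀ x, f x = none → x = none := fun x hx => hinj (hx.trans hz'.symm)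
  have h11n : ((1,1) : ℕ×ℕ) ∈ Sset n := by simp only [Sset, Set.mem_setOf_eq]; omega
  have h11m : ((1,1) : ℕ×ℕ) ∈ Sset m := by simp only [Sset, Set.mem_setOf_eq]; omega
  have hkey : ∀ a b : ℕ, (a,b) ∈ Sset n →
      ∃ q : ℕ × ℕ, q ∈ Sset m ∧ f (eElt n true a b) = eElt m true q.1 q.2 := by
    intro a b hab
    have hab' := hab
    simp only [Sset, Set.mem_setOf_eq] at hab'
    obtain ⟨x, hx⟩ : ∃ x, f (eElt n true a b) = some x := by
      cases hfx : f (eElt n true a b) with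
      | none =>
        exfalso
        have := hnone _ hfx
        rw [eElt_eq' true hab] at this
        exact Option.some_ne_none _ this
      | some x => exact ⟨x, rfl⟩
    obtain ⟨ε, Q⟩ := x
    have hadd1 := hadd' (eElt n true a b) (eElt n true 1 1)
    rw [eElt_add' hab h11n, show min a 1 = 1 from by omega, show min b 1 = 1 from by omega,
      h11, hx, eElt_eq' true h11m] at hadd1
    cases ε with
    | false => simp [Emod.add] at hadd1
    | true =>
      refine ⟨(Q.val.1, Q.val.2), Q.2, ?_⟩
      rw [hx, eElt_eq' true (Q.2 : (Q.val.1, Q.val.2) ∈ Sset m)]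
  have hkey2 : ∀ p : ℕ × ℕ, ∃ q : ℕ × ℕ,
      p ∈ Sset n → q ∈ Sset m ∧ f (eElt n true p.1 p.2) = eElt m true q.1 q.2 := by
    intro p
    by_cases hp : p ∈ Sset n
    · obtain ⟨q, hq⟩ := hkey p.1 p.2 hp
      exact ⟨q, fun _ => hq⟩
    · exact ⟨(1,1), fun h => absurd h hp⟩
  choose ψ hψ using hkey2
  have hmemψ : ∀ p ∈ Sset n, ψ p ∈ Sset m := fun p hp => (hψ p hp).1
  have hvalψ : ∀ a b : ℕ, (a,b) ∈ Sset n →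
      f (eElt n true a b) = eElt m true (ψ (a,b)).1 (ψ (a,b)).2 :=
    fun a b h => (hψ (a,b) h).2
  have hmeetψ : ∀ a b c d : ℕ, (a,b) ∈ Sset n → (c,d) ∈ Sset n →
      ψ (min a c, min b d) = (min (ψ (a,b)).1 (ψ (c,d)).1, min (ψ (a,b)).2 (ψ (c,d)).2) := by
    intro a b c d h1 h2
    have h3 : ((min a c, min b d) : ℕ×ℕ) ∈ Sset n := by
      simp only [Sset, Set.mem_setOf_eq] at h1 h2 ⊢; omega
    have e1 := hadd' (eElt n true a b) (eElt n true c d)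
    rw [eElt_add' h1 h2, hvalψ a b h1, hvalψ c d h2, hvalψ _ _ h3,
      eElt_add' (hmemψ _ h1) (hmemψ _ h2)] at e1
    have e2 := eElt_inj' (hmemψ _ h3) (by
      have := hmemψ _ h1; have := hmemψ _ h2
      simp only [Sset, Set.mem_setOf_eq] at *; omega) e1
    exact Prod.ext e2.1 e2.2
  have hinjψ : ∀ a b c d : ℕ, (a,b) ∈ Sset n → (c,d) ∈ Sset n →
      ψ (a,b) = ψ (c,d) → a = c ∧ b = d := by
    intro a b c d h1 h2 he
    have e1 : f (eElt n true a b) = f (eElt n true c d) := by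
      rw [hvalψ a b h1, hvalψ c d h2, he]
    have e2 := hinj e1
    rw [eElt_eq' true h1, eElt_eq' true h2] at e2
    simp only [Option.some.injEq, Prod.mk.injEq, Subtype.mk.injEq] at e2
    exact e2.2
  -- corner values of ψ
  have corner : ∀ a b c d : ℕ, (a,b) ∈ Sset n → (c,d) ∈ Sset m →
      f (eElt n true a b) = eElt m true c d → ψ (a,b) = (c,d) := by
    intro a b c d h1 h2 he
    have e1 := (hvalψ a b h1).symm.trans he
    have e2 := eElt_inj' (hmemψ _ h1) h2 e1
    exact Prod.ext e2.1 e2.2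
  have mn11 : ((1,2) : ℕ×ℕ) ∈ Sset n := by simp only [Sset, Set.mem_setOf_eq]; omega
  have mm11 : ((1,2) : ℕ×ℕ) ∈ Sset m := by simp only [Sset, Set.mem_setOf_eq]; omega
  have mn21 : ((2,1) : ℕ×ℕ) ∈ Sset n := by simp only [Sset, Set.mem_setOf_eq]; omega
  have mm21 : ((2,1) : ℕ×ℕ) ∈ Sset m := by simp only [Sset, Set.mem_setOf_eq]; omega
  have mn22 : ((2,2) : ℕ×ℕ) ∈ Sset n := by simp only [Sset, Set.mem_setOf_eq]; omega
  have mm22 : ((2,2) : ℕ×ℕ) ∈ Sset m := by simp only [Sset, Set.mem_setOf_eq]; omega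
  have tn11 : ((n-1,n-1) : ℕ×ℕ) ∈ Sset n := by simp only [Sset, Set.mem_setOf_eq]; omega
  have tm11 : ((m-1,m-1) : ℕ×ℕ) ∈ Sset m := by simp only [Sset, Set.mem_setOf_eq]; omega
  have tn12 : ((n-1,n) : ℕ×ℕ) ∈ Sset n := by simp only [Sset, Set.mem_setOf_eq]; omega
  have tm12 : ((m-1,m) : ℕ×ℕ) ∈ Sset m := by simp only [Sset, Set.mem_setOf_eq]; omega
  have tn21 : ((n,n-1) : ℕ×ℕ) ∈ Sset n := by simp only [Sset, Set.mem_setOf_eq]; omega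
  have tm21 : ((m,m-1) : ℕ×ℕ) ∈ Sset m := by simp only [Sset, Set.mem_setOf_eq]; omega
  have tn22 : ((n,n) : ℕ×ℕ) ∈ Sset n := by simp only [Sset, Set.mem_setOf_eq]; omega
  have tm22 : ((m,m) : ℕ×ℕ) ∈ Sset m := by simp only [Sset, Set.mem_setOf_eq]; omega
  obtain ⟨hnm, hid⟩ := comb n m hn hm ψ hmemψ hmeetψ hinjψ
    (corner 1 1 1 1 h11n h11m h11) (corner 1 2 1 2 mn11 mm11 h12)
    (corner 2 1 2 1 mn21 mm21 h21) (corner 2 2 2 2 mn22 mm22 h22)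
    (corner n (n-1) m (m-1) tn21 tm21 t21) (corner (n-1) n (m-1) m tn12 tm12 t12)
    (corner n n m m tn22 tm22 t22)
  subst hnm
  refine ⟨rfl, hz', ?_⟩
  intro ε i k hik
  have hv := hvalψ i k hik
  rw [hid (i,k) hik] at hv
  cases ε with
  | true => exact hv
  | false =>
    rw [← eElt_neg' hik, hneg' (eElt n true i k), hv, eElt_neg' hik]
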